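/- The function φ̃₃ satisfies, for all y ∈ ℝ, the separated eigenvalue equation with eigenvalue λ = 2 and angular parameter l = c: (1 + Q/(2P(y)))·φ̃₃''(y) + (P'(y)/(2P(y)))·φ̃₃'(y) + (2 − c²/P(y))·φ̃₃(y) = 0. -/

import Mathlib

open Real

/-- Rescaled solution `φ̃₁(y) = √((b²+c²−a²)/(2(c²−a²)))·sin y`. -/
noncomputable def phi1 (a b c y : ℝ) : ℝ :=
  Real.sqrt ((b ^ 2 + c ^ 2 - a ^ 2) / (2 * (c ^ 2 - a ^ 2))) * Real.sin y

/-- Rescaled solution `φ̃₂(y) = √((a²+c²−b²)/(2(c²−b²)))·cos y`. -/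
noncomputable def phi2 (a b c y : ℝ) : ℝ :=
  Real.sqrt ((a ^ 2 + c ^ 2 - b ^ 2) / (2 * (c ^ 2 - b ^ 2))) * Real.cos y

/-- Rescaled solution `φ̃₃(y) = √((a²+b²−c²)/(2(b²−c²)))·√(1 − ((b²−a²)/(c²−a²))·sin² y)`. -/
noncomputable def phi3 (a b c y : ℝ) : ℝ :=
  Real.sqrt ((a ^ 2 + b ^ 2 - c ^ 2) / (2 * (b ^ 2 - c ^ 2))) *
    Real.sqrt (1 - (b ^ 2 - a ^ 2) / (c ^ 2 - a ^ 2) * Real.sin y ^ 2)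

/-- `P(y) = (c² + (b²−a²)·cos 2y)/2`. -/
noncomputable def Pm (a b c y : ℝ) : ℝ := (c ^ 2 + (b ^ 2 - a ^ 2) * Real.cos (2 * y)) / 2

/-- `Q = c² − a² − b²`. -/
noncomputable def Qm (a b c : ℝ) : ℝ := c ^ 2 - a ^ 2 - b ^ 2

set_option maxHeartbeats 2000000 in
/-- The function `φ̃` satisfies, for all `y ∈ ℝ`, the separated
eigenvalue equation with eigenvalue `λ = 2` and angular parameter `l = c`:
`(1 + Q/(2P(y)))·φ̃'' + (P'(y)/(2P(y)))·φ̃' + (2 − l²/P(y))·φ̃ = 0`. -/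
theorem phi3_separated_equation (a b c : ℝ) (ha : a ^ 2 < c ^ 2) (hb : b ^ 2 < c ^ 2)
    (habc : a ^ 2 + b ^ 2 ≤ c ^ 2) :
    ∀ y : ℝ,
      (1 + Qm a b c / (2 * Pm a b c y)) * deriv (deriv (phi3 a b c)) y
        + deriv (Pm a b c) y / (2 * Pm a b c y) * deriv (phi3 a b c) y
        + (2 - c ^ 2 / Pm a b c y) * phi3 a b c y = 0 := by
  intro y
  have hca : (0:ℝ) < c ^ 2 - a ^ 2 := by linarith
  have hca' : c ^ 2 - a ^ 2 ≠ 0 := ne_of_gt hca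
  have hS : ∀ x : ℝ, 0 < 1 - (b ^ 2 - a ^ 2) / (c ^ 2 - a ^ 2) * Real.sin x ^ 2 := by
    intro x
    have h1 : Real.sin x ^ 2 ≤ 1 := Real.sin_sq_le_one x
    have h0 : 0 ≤ Real.sin x ^ 2 := sq_nonneg _
    have heq : 1 - (b ^ 2 - a ^ 2) / (c ^ 2 - a ^ 2) * Real.sin x ^ 2
        = ((c ^ 2 - a ^ 2) - (b ^ 2 - a ^ 2) * Real.sin x ^ 2) / (c ^ 2 - a ^ 2) := by
      field_simp
    rw [heq]
    apply div_pos _ hca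
    rcases le_or_gt (b ^ 2) (a ^ 2) with hba | hba
    · nlinarith [mul_nonneg h0 (sub_nonneg.2 hba)]
    · nlinarith [mul_nonneg (sub_nonneg.2 h1) (sub_nonneg.2 hba.le)]
  have hSne : ∀ x : ℝ, (1 - (b ^ 2 - a ^ 2) / (c ^ 2 - a ^ 2) * Real.sin x ^ 2) ≠ 0 :=
    fun x => ne_of_gt (hS x)
  have htpos : ∀ x : ℝ,
      0 < Real.sqrt (1 - (b ^ 2 - a ^ 2) / (c ^ 2 - a ^ 2) * Real.sin x ^ 2) :=
    fun x => Real.sqrt_pos.2 (hS x)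
  have hSd : ∀ x : ℝ, HasDerivAt (fun x => 1 - (b ^ 2 - a ^ 2) / (c ^ 2 - a ^ 2) * Real.sin x ^ 2)
      (-((b ^ 2 - a ^ 2) / (c ^ 2 - a ^ 2) * (2 * Real.sin x * Real.cos x))) x := by
    intro x
    have h1 : HasDerivAt (fun x => Real.sin x ^ 2) (2 * Real.sin x * Real.cos x) x := by
      simpa using (Real.hasDerivAt_sin x).fun_pow 2
    exact (h1.const_mul ((b ^ 2 - a ^ 2) / (c ^ 2 - a ^ 2))).const_sub 1
  have hg : ∀ x : ℝ, HasDerivAt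
      (fun x => Real.sqrt (1 - (b ^ 2 - a ^ 2) / (c ^ 2 - a ^ 2) * Real.sin x ^ 2))
      (-((b ^ 2 - a ^ 2) / (c ^ 2 - a ^ 2) * (2 * Real.sin x * Real.cos x)) /
        (2 * Real.sqrt (1 - (b ^ 2 - a ^ 2) / (c ^ 2 - a ^ 2) * Real.sin x ^ 2))) x :=
    fun x => (hSd x).sqrt (hSne x)
  set K : ℝ := Real.sqrt ((a ^ 2 + b ^ 2 - c ^ 2) / (2 * (b ^ 2 - c ^ 2))) with hK
  have hphi : phi3 a b c = fun x =>
      K * Real.sqrt (1 - (b ^ 2 - a ^ 2) / (c ^ 2 - a ^ 2) * Real.sin x ^ 2) := by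
    funext x
    simp only [phi3, hK]
  have hd1 : deriv (fun x =>
      K * Real.sqrt (1 - (b ^ 2 - a ^ 2) / (c ^ 2 - a ^ 2) * Real.sin x ^ 2)) = fun x =>
      K * (-((b ^ 2 - a ^ 2) / (c ^ 2 - a ^ 2) * (2 * Real.sin x * Real.cos x)) /
        (2 * Real.sqrt (1 - (b ^ 2 - a ^ 2) / (c ^ 2 - a ^ 2) * Real.sin x ^ 2))) :=
    funext fun x => ((hg x).const_mul K).deriv
  have hu : HasDerivAt
      (fun x => -((b ^ 2 - a ^ 2) / (c ^ 2 - a ^ 2) * (2 * Real.sin x * Real.cos x)))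
      (-((b ^ 2 - a ^ 2) / (c ^ 2 - a ^ 2) *
        (2 * Real.cos y * Real.cos y + 2 * Real.sin y * -Real.sin y))) y := by
    have h1 : HasDerivAt (fun x => 2 * Real.sin x * Real.cos x)
        (2 * Real.cos y * Real.cos y + 2 * Real.sin y * -Real.sin y) y :=
      ((Real.hasDerivAt_sin y).const_mul 2).mul (Real.hasDerivAt_cos y)
    exact (h1.const_mul ((b ^ 2 - a ^ 2) / (c ^ 2 - a ^ 2))).neg
  have hv : HasDerivAt (fun x =>
      2 * Real.sqrt (1 - (b ^ 2 - a ^ 2) / (c ^ 2 - a ^ 2) * Real.sin x ^ 2))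
      (2 * (-((b ^ 2 - a ^ 2) / (c ^ 2 - a ^ 2) * (2 * Real.sin y * Real.cos y)) /
        (2 * Real.sqrt (1 - (b ^ 2 - a ^ 2) / (c ^ 2 - a ^ 2) * Real.sin y ^ 2)))) y :=
    (hg y).const_mul 2
  have hvne : 2 * Real.sqrt (1 - (b ^ 2 - a ^ 2) / (c ^ 2 - a ^ 2) * Real.sin y ^ 2) ≠ 0 := by
    have := htpos y
    positivity
  have hd2 : HasDerivAt (fun x =>
      K * (-((b ^ 2 - a ^ 2) / (c ^ 2 - a ^ 2) * (2 * Real.sin x * Real.cos x)) /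
        (2 * Real.sqrt (1 - (b ^ 2 - a ^ 2) / (c ^ 2 - a ^ 2) * Real.sin x ^ 2))))
      (K * ((-((b ^ 2 - a ^ 2) / (c ^ 2 - a ^ 2) *
          (2 * Real.cos y * Real.cos y + 2 * Real.sin y * -Real.sin y)) *
          (2 * Real.sqrt (1 - (b ^ 2 - a ^ 2) / (c ^ 2 - a ^ 2) * Real.sin y ^ 2))
        - -((b ^ 2 - a ^ 2) / (c ^ 2 - a ^ 2) * (2 * Real.sin y * Real.cos y)) *
          (2 * (-((b ^ 2 - a ^ 2) / (c ^ 2 - a ^ 2) * (2 * Real.sin y * Real.cos y)) /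
            (2 * Real.sqrt (1 - (b ^ 2 - a ^ 2) / (c ^ 2 - a ^ 2) * Real.sin y ^ 2))))) /
        (2 * Real.sqrt (1 - (b ^ 2 - a ^ 2) / (c ^ 2 - a ^ 2) * Real.sin y ^ 2)) ^ 2)) y :=
    (hu.div hv hvne).const_mul K
  have hPd : HasDerivAt (Pm a b c) ((b ^ 2 - a ^ 2) * (-Real.sin (2 * y) * 2) / 2) y := by
    unfold Pm
    have h2y : HasDerivAt (fun x : ℝ => 2 * x) 2 y := by
      simpa using (hasDerivAt_id y).const_mul 2
    have hcos : HasDerivAt (fun x : ℝ => Real.cos (2 * x)) (-Real.sin (2 * y) * 2) y := h2y.cos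
    exact ((hcos.const_mul (b ^ 2 - a ^ 2)).const_add (c ^ 2)).div_const 2
  have hPval : Pm a b c y = (c ^ 2 + (b ^ 2 - a ^ 2) * (2 * Real.cos y ^ 2 - 1)) / 2 := by
    rw [Pm, Real.cos_two_mul]
  have hDpos : (0:ℝ) < c ^ 2 + (b ^ 2 - a ^ 2) * (2 * Real.cos y ^ 2 - 1) := by
    rcases le_or_gt (a ^ 2) (b ^ 2) with hab | hab
    · nlinarith [mul_nonneg (sub_nonneg.2 hab) (sq_nonneg (Real.cos y))]
    · nlinarith [mul_nonneg (sub_nonneg.2 hab.le) (sub_nonneg.2 (Real.cos_sq_le_one y))]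
  -- rewrite the goal in explicit form
  simp only [hphi, hd1]
  rw [hd2.deriv, hPd.deriv, Qm, hPval, Real.sin_two_mul]
  set s : ℝ := Real.sin y with hss
  set o : ℝ := Real.cos y with hos
  set k : ℝ := (b ^ 2 - a ^ 2) / (c ^ 2 - a ^ 2) with hks
  set t : ℝ := Real.sqrt (1 - k * s ^ 2) with hts
  set D : ℝ := c ^ 2 + (b ^ 2 - a ^ 2) * (2 * o ^ 2 - 1) with hDs
  have ht0' : 0 < t := by
    rw [hts, hss]; exact htpos y
  have ht0 : t ≠ 0 := ne_of_gt ht0'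
  have ht2 : t ^ 2 = 1 - k * s ^ 2 := by
    rw [hts, hss]; exact Real.sq_sqrt (hS y).le
  have hkeq : k * (c ^ 2 - a ^ 2) = b ^ 2 - a ^ 2 := by
    rw [hks]; exact div_mul_cancel₀ _ hca'
  have hoeq : o ^ 2 = 1 - s ^ 2 := by
    rw [hos, hss]
    have := Real.sin_sq_add_cos_sq y
    linarith
  have hDne : D ≠ 0 := ne_of_gt hDpos
  have hM : (c ^ 2 - a ^ 2) ^ 2 *
      ((D + (c ^ 2 - a ^ 2 - b ^ 2)) * (2 * (-(2 * k * (o ^ 2 - s ^ 2))) * t ^ 2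
          - (-(2 * k * s * o)) ^ 2) / 4
        + (-(2 * (b ^ 2 - a ^ 2) * s * o)) * (-(2 * k * s * o)) * t ^ 2 / 2
        + 2 * (D - c ^ 2) * t ^ 4) = 0 := by
    rw [hDs]
    linear_combination ((-2:ℝ)*c^6*o^2*k + (2:ℝ)*c^6*s^2*k + (-2:ℝ)*b^2*c^4 + (-2:ℝ)*b^2*c^4*t^2 + (4:ℝ)*b^2*c^4*o^2 + (2:ℝ)*b^2*c^4*o^2*k + (4:ℝ)*b^2*c^4*o^2*t^2 + (-2:ℝ)*b^2*c^4*o^4*k + (2:ℝ)*a^2*c^4 + (2:ℝ)*a^2*c^4*t^2 + (-4:ℝ)*a^2*c^4*o^2 + (4:ℝ)*a^2*c^4*o^2*k + (-4:ℝ)*a^2*c^4*o^2*t^2 + (2:ℝ)*a^2*c^4*o^4*k + (-6:ℝ)*a^2*c^4*s^2*k + (4:ℝ)*a^2*b^2*c^2 + (4:ℝ)*a^2*b^2*c^2*t^2 + (-8:ℝ)*a^2*b^2*c^2*o^2 + (-4:ℝ)*a^2*b^2*c^2*o^2*k + (-8:ℝ)*a^2*b^2*c^2*o^2*t^2 + (4:ℝ)*a^2*b^2*c^2*o^4*k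 + (-4:ℝ)*a^4*c^2 + (-4:ℝ)*a^4*c^2*t^2 + (8:ℝ)*a^4*c^2*o^2 + (-2:ℝ)*a^4*c^2*o^2*k + (8:ℝ)*a^4*c^2*o^2*t^2 + (-4:ℝ)*a^4*c^2*o^4*k + (6:ℝ)*a^4*c^2*s^2*k + (-2:ℝ)*a^4*b^2 + (-2:ℝ)*a^4*b^2*t^2 + (4:ℝ)*a^4*b^2*o^2 + (2:ℝ)*a^4*b^2*o^2*k + (4:ℝ)*a^4*b^2*o^2*t^2 + (-2:ℝ)*a^4*b^2*o^4*k + (2:ℝ)*a^6 + (2:ℝ)*a^6*t^2 + (-4:ℝ)*a^6*o^2 + (-4:ℝ)*a^6*o^2*t^2 + (2:ℝ)*a^6*o^4*k + (-2:ℝ)*a^6*s^2*k) * ht2 + ((-2:ℝ)*c^6*k + (4:ℝ)*b^2*c^4 + (-2:ℝ)*b^2*c^4*o^2*k + (-2:ℝ)*b^2*c^4*s^2*k + (-4:ℝ)*a^2*c^4 + (6:ℝ)*a^2*c^4*k + (2:ℝ)*a^2*c^4*o^2*k + (2:ℝ)*a^2*c^4*s^2*k + (-8:ℝ)*a^2*b^2*c^2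 + (4:ℝ)*a^2*b^2*c^2*o^2*k + (4:ℝ)*a^2*b^2*c^2*s^2*k + (8:ℝ)*a^4*c^2 + (-6:ℝ)*a^4*c^2*k + (-4:ℝ)*a^4*c^2*o^2*k + (-4:ℝ)*a^4*c^2*s^2*k + (4:ℝ)*a^4*b^2 + (-2:ℝ)*a^4*b^2*o^2*k + (-2:ℝ)*a^4*b^2*s^2*k + (-4:ℝ)*a^6 + (2:ℝ)*a^6*k + (2:ℝ)*a^6*o^2*k + (2:ℝ)*a^6*s^2*k) * hoeq + ((-2:ℝ)*c^4 + (4:ℝ)*c^4*s^2 + (-2:ℝ)*c^4*s^4*k + (4:ℝ)*a^2*c^2 + (-8:ℝ)*a^2*c^2*s^2 + (4:ℝ)*a^2*c^2*s^4*k + (-2:ℝ)*a^4 + (4:ℝ)*a^4*s^2 + (-2:ℝ)*a^4*s^4*k) * hkeq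
  have hMK : K * ((c ^ 2 - a ^ 2) ^ 2 *
      ((D + (c ^ 2 - a ^ 2 - b ^ 2)) * (2 * (-(2 * k * (o ^ 2 - s ^ 2))) * t ^ 2
          - (-(2 * k * s * o)) ^ 2) / 4
        + (-(2 * (b ^ 2 - a ^ 2) * s * o)) * (-(2 * k * s * o)) * t ^ 2 / 2
        + 2 * (D - c ^ 2) * t ^ 4)) = 0 := by
    rw [hM, mul_zero]
  have hXne : t ^ 3 * (D * (c ^ 2 - a ^ 2) ^ 2) ≠ 0 :=
    mul_ne_zero (pow_ne_zero _ ht0) (mul_ne_zero hDne (pow_ne_zero _ hca'))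
  apply mul_right_cancel₀ hXne
  rw [zero_mul]
  refine Eq.trans ?_ hMK
  field_simp
  ring
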